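/- Let α, γ, μ > 0 with α = μγ, and let β, δ ∈ (0,1) with 2β < 1. Then for all t > 0, e^(αt) t^β ∫₀ᵗ (t-s)^(-δ) e^(-μγ(t-s)) e^(-2αs) s^(-2β) ds ≤ B(1-2β, 1-δ) · t^(1-δ-β), where B is the Beta function. -/

import Mathlib

open MeasureTheory Real

/-- The Beta function B(a,b) = ∫₀¹ τ^(a-1) (1-τ)^(b-1) dτ. -/
noncomputable def betaFn (a b : ℝ) : ℝ := ∫ τ in (0:ℝ)..1, τ ^ (a - 1) * (1 - τ) ^ (b - 1)

theorem scaling_integral_bound (α γ μ β δ : ℝ) (hα : 0 < α) (hγ : 0 < γ) (hμ : 0 < μ)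
    (hαγ : α = μ * γ) (hβ0 : 0 < β) (hβ : 2 * β < 1) (hδ0 : 0 < δ) (hδ1 : δ < 1) :
    ∀ t > (0:ℝ),
      Real.exp (α * t) * t ^ β *
          (∫ s in (0:ℝ)..t, (t - s) ^ (-δ) * Real.exp (-(μ * γ) * (t - s)) *
            Real.exp (-(2 * α) * s) * s ^ (-(2 * β))) ≤
        betaFn (1 - 2 * β) (1 - δ) * t ^ (1 - δ - β) := by
  intro t ht
  have h2β : (-1:ℝ) < -(2 * β) := by linarith
  have hδ' : (-1:ℝ) < -δ := by linarith
  set g : ℝ → ℝ := fun s => (t - s) ^ (-δ) * s ^ (-(2 * β)) with hgdef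
  -- integrability of g on [0, t]
  have hg1 : IntervalIntegrable g volume 0 (t / 2) := by
    have h1 : IntervalIntegrable (fun s : ℝ => s ^ (-(2 * β))) volume 0 (t / 2) :=
      intervalIntegral.intervalIntegrable_rpow' h2β
    have hcont : ContinuousOn (fun s : ℝ => (t - s) ^ (-δ)) (Set.uIcc 0 (t / 2)) := by
      apply ContinuousOn.rpow_const
      · exact (continuous_const.sub continuous_id).continuousOn
      · intro x hx
        rw [Set.uIcc_of_le (by linarith)] at hx
        left
        have := hx.2
        intro h0
        nlinarith [hx.1, hx.2]
    simpa [g, mul_comm] using h1.continuousOn_mul hcont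
  have hg2 : IntervalIntegrable g volume (t / 2) t := by
    have h1 : IntervalIntegrable (fun u : ℝ => u ^ (-δ)) volume 0 (t / 2) :=
      intervalIntegral.intervalIntegrable_rpow' hδ'
    have h2 : IntervalIntegrable (fun s : ℝ => (t - s) ^ (-δ)) volume (t - 0) (t - t / 2) :=
      h1.comp_sub_left t
    have h2' : IntervalIntegrable (fun s : ℝ => (t - s) ^ (-δ)) volume (t / 2) t := by
      have : t - 0 = t := by ring
      have h' : t - t / 2 = t / 2 := by ring
      rw [this, h'] at h2
      exact h2.symm
    have hcont : ContinuousOn (fun s : ℝ => s ^ (-(2 * β))) (Set.uIcc (t / 2) t) := by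
      apply ContinuousOn.rpow_const continuous_id.continuousOn
      intro x hx
      rw [Set.uIcc_of_le (by linarith)] at hx
      left
      intro h0
      simp only [id_eq] at h0
      nlinarith [hx.1]
    simpa [g] using h2'.mul_continuousOn hcont
  have hgint : IntervalIntegrable g volume 0 t := hg1.trans hg2
  -- value of ∫ g via substitution s = τ t
  have hval : (∫ s in (0:ℝ)..t, g s) = t ^ (1 - δ - 2 * β) * betaFn (1 - 2 * β) (1 - δ) := by
    have hsub := intervalIntegral.integral_comp_mul_right g (ne_of_gt ht) (a := 0) (b := 1)
    rw [zero_mul, one_mul] at hsub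
    have hcongr : (∫ τ in (0:ℝ)..1, g (τ * t))
        = ∫ τ in (0:ℝ)..1, t ^ (-δ - 2 * β) * (τ ^ (1 - 2 * β - 1) * (1 - τ) ^ (1 - δ - 1)) := by
      apply intervalIntegral.integral_congr
      intro τ hτ
      rw [Set.uIcc_of_le (by norm_num)] at hτ
      obtain ⟨hτ0, hτ1⟩ := hτ
      have h1τ : (0:ℝ) ≤ 1 - τ := by linarith
      simp only [g]
      have e1 : t - τ * t = t * (1 - τ) := by ring
      have e2 : τ * t = t * τ := by ring
      rw [e1, e2, Real.mul_rpow ht.le h1τ, Real.mul_rpow ht.le hτ0]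
      have e3 : (1:ℝ) - 2 * β - 1 = -(2 * β) := by ring
      have e4 : (1:ℝ) - δ - 1 = -δ := by ring
      rw [e3, e4, show -δ - 2 * β = -δ + -(2 * β) by ring, Real.rpow_add ht]
      ring
    rw [hcongr, intervalIntegral.integral_const_mul] at hsub
    have : (∫ s in (0:ℝ)..t, g s) = t * (t ^ (-δ - 2 * β) * betaFn (1 - 2 * β) (1 - δ)) := by
      rw [betaFn]
      field_simp at hsub ⊢
      rw [hsub, smul_eq_mul, mul_comm _ t, ← mul_assoc, mul_one_div_cancel ht.ne']
      ring
    rw [this, ← mul_assoc]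
    congr 1
    nth_rewrite 1 [← Real.rpow_one t]
    rw [← Real.rpow_add ht]
    congr 1
    ring
  -- the weighted integrand
  set F : ℝ → ℝ := fun s => Real.exp (α * t) *
      ((t - s) ^ (-δ) * Real.exp (-(μ * γ) * (t - s)) * Real.exp (-(2 * α) * s) *
        s ^ (-(2 * β))) with hFdef
  have hFeq : ∀ s : ℝ, F s = g s * Real.exp (-(α * s)) := by
    intro s
    simp only [F, g, ← hαγ]
    rw [show Real.exp (α * t) * ((t - s) ^ (-δ) * Real.exp (-α * (t - s)) *
        Real.exp (-(2 * α) * s) * s ^ (-(2 * β)))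
      = (t - s) ^ (-δ) * s ^ (-(2 * β)) *
          (Real.exp (α * t) * Real.exp (-α * (t - s)) * Real.exp (-(2 * α) * s)) by ring]
    rw [← Real.exp_add, ← Real.exp_add]
    congr 2
    ring
  have hgnonneg : ∀ s ∈ Set.Icc (0:ℝ) t, 0 ≤ g s := by
    intro s hs
    exact mul_nonneg (Real.rpow_nonneg (by linarith [hs.2]) _)
      (Real.rpow_nonneg hs.1 _)
  have hFle : ∀ s ∈ Set.Icc (0:ℝ) t, F s ≤ g s := by
    intro s hs
    rw [hFeq s]
    calc g s * Real.exp (-(α * s)) ≤ g s * 1 := by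
          apply mul_le_mul_of_nonneg_left _ (hgnonneg s hs)
          rw [Real.exp_le_one_iff]
          have := hs.1
          nlinarith
      _ = g s := mul_one _
  have hFint : IntervalIntegrable F volume 0 t := by
    apply hgint.mono_fun'
    · apply Measurable.aestronglyMeasurable
      simp only [F]
      fun_prop
    · rw [Set.uIoc_of_le ht.le]
      refine (ae_restrict_iff' measurableSet_Ioc).mpr (ae_of_all _ ?_)
      intro s hs
      have hs' : s ∈ Set.Icc (0:ℝ) t := ⟨hs.1.le, hs.2⟩
      have hF0 : 0 ≤ F s := by
        rw [hFeq s]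
        exact mul_nonneg (hgnonneg s hs') (Real.exp_pos _).le
      simpa [Real.norm_eq_abs, abs_of_nonneg hF0] using hFle s hs'
  have hmono : (∫ s in (0:ℝ)..t, F s) ≤ ∫ s in (0:ℝ)..t, g s :=
    intervalIntegral.integral_mono_on ht.le hFint hgint hFle
  have hpull : Real.exp (α * t) *
      (∫ s in (0:ℝ)..t, (t - s) ^ (-δ) * Real.exp (-(μ * γ) * (t - s)) *
        Real.exp (-(2 * α) * s) * s ^ (-(2 * β))) = ∫ s in (0:ℝ)..t, F s := by
    rw [← intervalIntegral.integral_const_mul]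
  calc Real.exp (α * t) * t ^ β *
          (∫ s in (0:ℝ)..t, (t - s) ^ (-δ) * Real.exp (-(μ * γ) * (t - s)) *
            Real.exp (-(2 * α) * s) * s ^ (-(2 * β)))
      = t ^ β * (∫ s in (0:ℝ)..t, F s) := by rw [← hpull]; ring
    _ ≤ t ^ β * ∫ s in (0:ℝ)..t, g s := by
        apply mul_le_mul_of_nonneg_left hmono (Real.rpow_nonneg ht.le _)
    _ = betaFn (1 - 2 * β) (1 - δ) * t ^ (1 - δ - β) := by
        rw [hval, ← mul_assoc, ← Real.rpow_add ht]
        rw [show β + (1 - δ - 2 * β) = 1 - δ - β by ring]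
        ring
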